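/- Let L and N be positive integers and I_1,…,I_N real numbers. Let A : ℝ → ℝ be A(x) = x·arctan x − (1/2)·log(1+x²) (the antiderivative of arctan vanishing at 0), and define M : ℝ^N → ℝ by M(λ_1,…,λ_N) = (1/π)·∑_{k=1}^N A(λ_k) − (1/L)·∑_{k=1}^N λ_k I_k + (1/(2πL))·∑_{k=1}^N ∑_{l=1}^N A(λ_k − λ_l). Then M is strictly convex on ℝ^N. -/

import Mathlib

open Real Finset

/-- The antiderivative of `arctan` vanishing at `0`. -/
noncomputable def arctanAntideriv (x : ℝ) : ℝ :=
  x * arctan x - (1 / 2) * Real.log (1 + x ^ 2)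

lemma hasDerivAt_arctanAntideriv (x : ℝ) :
    HasDerivAt arctanAntideriv (arctan x) x := by
  have h1 : HasDerivAt (fun x : ℝ => x * arctan x)
      (1 * arctan x + x * (1 / (1 + x ^ 2))) x :=
    (hasDerivAt_id x).mul (Real.hasDerivAt_arctan x)
  have hpos : (0:ℝ) < 1 + x ^ 2 := by positivity
  have h2 : HasDerivAt (fun x : ℝ => (1:ℝ) + x ^ 2) (2 * x) x := by
    simpa using (hasDerivAt_pow 2 x).const_add (1:ℝ)
  have h3 : HasDerivAt (fun x : ℝ => Real.log (1 + x ^ 2)) (2 * x / (1 + x ^ 2)) x :=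
    h2.log hpos.ne'
  have h := h1.sub (h3.const_mul (1/2 : ℝ))
  convert h using 1
  · rfl
  · rfl
  · rfl
  · ring

lemma strictConvexOn_arctanAntideriv :
    StrictConvexOn ℝ Set.univ arctanAntideriv := by
  apply StrictMonoOn.strictConvexOn_of_deriv convex_univ
  · exact fun x _ => ((hasDerivAt_arctanAntideriv x).differentiableAt).continuousAt.continuousWithinAt
  · intro x _ y _ hxy
    rw [(hasDerivAt_arctanAntideriv x).deriv, (hasDerivAt_arctanAntideriv y).deriv]
    exact Real.arctan_strictMono (by simpa using hxy)

/-- The Yang–Yang-type function `M` is strictly convex on `ℝ^N`. -/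
theorem yangYang_strictConvexOn (L N : ℕ) (hL : 0 < L) (hN : 0 < N)
    (Inum : Fin N → ℝ) :
    StrictConvexOn ℝ Set.univ (fun lam : Fin N → ℝ =>
      (1 / π) * ∑ k, arctanAntideriv (lam k)
        - (1 / L) * ∑ k, lam k * Inum k
        + (1 / (2 * π * L)) * ∑ k, ∑ l, arctanAntideriv (lam k - lam l)) := by
  have hA := strictConvexOn_arctanAntideriv
  have hAc := hA.convexOn
  refine ⟨convex_univ, ?_⟩
  intro x _ y _ hxy a b ha hb hab
  have hmix : ∀ k : Fin N, (a • x + b • y) k = a * x k + b * y k := by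
    intro k; simp [smul_eq_mul]
  have hAle : ∀ u v : ℝ, arctanAntideriv (a * u + b * v)
      ≤ a * arctanAntideriv u + b * arctanAntideriv v := by
    intro u v
    have := hAc.2 (Set.mem_univ u) (Set.mem_univ v) ha.le hb.le hab
    simpa [smul_eq_mul] using this
  -- strict term
  obtain ⟨k0, hk0⟩ := Function.ne_iff.mp hxy
  have hS1 : ∑ k, arctanAntideriv ((a • x + b • y) k)
      < a * ∑ k, arctanAntideriv (x k) + b * ∑ k, arctanAntideriv (y k) := by
    rw [Finset.mul_sum, Finset.mul_sum, ← Finset.sum_add_distrib]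
    apply Finset.sum_lt_sum
    · intro k _
      rw [hmix k]; exact hAle _ _
    · refine ⟨k0, Finset.mem_univ _, ?_⟩
      rw [hmix k0]
      have := hA.2 (Set.mem_univ (x k0)) (Set.mem_univ (y k0)) hk0 ha hb hab
      simpa [smul_eq_mul] using this
  have hS3 : ∑ k, ∑ l, arctanAntideriv ((a • x + b • y) k - (a • x + b • y) l)
      ≤ a * ∑ k, ∑ l, arctanAntideriv (x k - x l)
        + b * ∑ k, ∑ l, arctanAntideriv (y k - y l) := by
    rw [Finset.mul_sum, Finset.mul_sum, ← Finset.sum_add_distrib]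
    apply Finset.sum_le_sum
    intro k _
    rw [Finset.mul_sum, Finset.mul_sum, ← Finset.sum_add_distrib]
    apply Finset.sum_le_sum
    intro l _
    rw [hmix k, hmix l]
    have h := hAle (x k - x l) (y k - y l)
    have : a * (x k - x l) + b * (y k - y l)
        = a * x k + b * y k - (a * x l + b * y l) := by ring
    rwa [this] at h
  have hS2 : ∑ k, (a • x + b • y) k * Inum k
      = a * ∑ k, x k * Inum k + b * ∑ k, y k * Inum k := by
    rw [Finset.mul_sum, Finset.mul_sum, ← Finset.sum_add_distrib]
    refine Finset.sum_congr rfl fun k _ => ?_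
    rw [hmix k]; ring
  have hπ : (0:ℝ) < 1 / π := by positivity
  have hLpos : (0:ℝ) < (L:ℝ) := by exact_mod_cast hL
  have hc : (0:ℝ) < 1 / (2 * π * L) := by positivity
  simp only [smul_eq_mul]
  have h1 := mul_lt_mul_of_pos_left hS1 hπ
  have h3 := mul_le_mul_of_nonneg_left hS3 hc.le
  have h2 := congrArg (fun t => (1 / (L:ℝ)) * t) hS2
  nlinarith [h1, h3, h2]
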